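/- Let C1 and C2 be real numbers and let s, t : ℕ → ℝ be the SimRank iterates on the complete bipartite graph K_{2,2}, i.e. s 0 = 0, t 0 = 0, s (k+1) = (C2/2)·(1 + t k) and t (k+1) = (C1/2)·(1 + s k). Then for every k ∈ ℕ, t k = (C1/2) · Σ_{i=1}^{k} (1/2)^{i-1} · C2^{⌊i/2⌋} · C1^{⌊(i-1)/2⌋}. -/

import Mathlib

theorem simrank_K22_closed_form_t
    (C1 C2 : ℝ) (s t : ℕ → ℝ)
    (hs0 : s 0 = 0) (ht0 : t 0 = 0)
    (hs : ∀ k, s (k + 1) = (C2 / 2) * (1 + t k))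
    (ht : ∀ k, t (k + 1) = (C1 / 2) * (1 + s k)) :
    ∀ k : ℕ, t k =
      (C1 / 2) * ∑ i ∈ Finset.Icc 1 k,
        (1 / 2 : ℝ) ^ (i - 1) * C2 ^ (i / 2) * C1 ^ ((i - 1) / 2) := by
  have step : ∀ (A B : ℝ) (k : ℕ),
      1 + (B / 2) * ∑ i ∈ Finset.range k,
          (1 / 2 : ℝ) ^ i * A ^ ((i + 1) / 2) * B ^ (i / 2)
        = ∑ i ∈ Finset.range (k + 1),
          (1 / 2 : ℝ) ^ i * B ^ ((i + 1) / 2) * A ^ (i / 2) := by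
    intro A B k
    rw [Finset.sum_range_succ', Finset.mul_sum]
    have : ∀ i ∈ Finset.range k,
        (B / 2) * ((1 / 2 : ℝ) ^ i * A ^ ((i + 1) / 2) * B ^ (i / 2))
          = (1 / 2 : ℝ) ^ (i + 1) * B ^ ((i + 1 + 1) / 2) * A ^ ((i + 1) / 2) := by
      intro i _
      have h2 : (i + 1 + 1) / 2 = i / 2 + 1 := by omega
      rw [h2, pow_succ, pow_succ]
      ring
    rw [Finset.sum_congr rfl this]
    norm_num [add_comm]
  have main : ∀ k : ℕ,
      t k = (C1 / 2) * ∑ i ∈ Finset.range k,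
        (1 / 2 : ℝ) ^ i * C2 ^ ((i + 1) / 2) * C1 ^ (i / 2) ∧
      s k = (C2 / 2) * ∑ i ∈ Finset.range k,
        (1 / 2 : ℝ) ^ i * C1 ^ ((i + 1) / 2) * C2 ^ (i / 2) := by
    intro k
    induction k with
    | zero => simp [hs0, ht0]
    | succ k ih =>
      obtain ⟨iht, ihs⟩ := ih
      refine ⟨?_, ?_⟩
      · rw [ht k, ihs, step C1 C2 k]
      · rw [hs k, iht, step C2 C1 k]
  intro k
  rw [(main k).1, ← Finset.Ico_add_one_right_eq_Icc, Finset.sum_Ico_eq_sum_range]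
  simp only [Nat.add_sub_cancel, Nat.add_sub_cancel_left]
  congr 1
  apply Finset.sum_congr rfl
  intro i _
  rw [add_comm 1 i]
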